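/- (Findings, combined gradient of the second-order Taylor model) Let D ≥ 1, n ≥ 2, c ∈ ℝ, g ∈ ℝ^D, ỹ ∈ ℝ^D, and let H ∈ ℝ^{D×D} be symmetric. Let X ∈ ℝ^{D×n} have all rows non-constant, with row-wise standardization Y(X) having rows y_j = y(x_j) ∈ ℝⁿ and columns y^{(i)} ∈ ℝ^D. Define the second-order Taylor model of the batch loss T(X) = n·c + Σ_{i=1}^n (y^{(i)}−ỹ)ᵀ g + (1/2)Σ_{i=1}^n (y^{(i)}−ỹ)ᵀ H (y^{(i)}−ỹ). Then for every d ∈ {1,…,D}, the gradient of T with respect to the row x_d equals (1/σ(x_d)) · Σ_{j≠d} H_{d,j} ( y_j − (⟨y_j, y_d⟩/‖y_d‖²)·y_d ). In particular the gradient g, the diagonal of H, and the linearly-correlated components of the off-diagonal interactions contribute nothing to the gradient with respect to X. -/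

import Mathlib

open scoped BigOperators

/-- Mini-batch mean of a feature dimension across `n` samples. -/
noncomputable def bmean {n : ℕ} (x : Fin n → ℝ) : ℝ := (∑ i, x i) / n

/-- Mini-batch standard deviation of a feature dimension across `n` samples. -/
noncomputable def bstd {n : ℕ} (x : Fin n → ℝ) : ℝ :=
  Real.sqrt ((∑ i, (x i - bmean x) ^ 2) / n)

/-- `x` is non-constant: it differs from the constant vector of its mean. -/
def NonConstant {n : ℕ} (x : Fin n → ℝ) : Prop := x ≠ fun _ => bmean x

/-- The batch-normalization standardization phase (with ε = 0). -/
noncomputable def standardize {n : ℕ} (x : Fin n → ℝ) : Fin n → ℝ :=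
  fun i => (x i - bmean x) / bstd x

section Aux
variable {n : ℕ}

noncomputable def coeffCLM (a : Fin n → ℝ) : (Fin n → ℝ) →L[ℝ] ℝ :=
  ∑ j, a j • (ContinuousLinearMap.proj j : (Fin n → ℝ) →L[ℝ] ℝ)

@[simp] lemma coeffCLM_apply (a w : Fin n → ℝ) : coeffCLM a w = ∑ j, a j * w j := by
  simp [coeffCLM, ContinuousLinearMap.sum_apply]

lemma sum_center (hn : (n:ℝ) ≠ 0) (x : Fin n → ℝ) : ∑ i, (x i - bmean x) = 0 := by
  simp only [Finset.sum_sub_distrib, Finset.sum_const, Finset.card_univ, Fintype.card_fin,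
    bmean, nsmul_eq_mul]
  field_simp
  ring

lemma variance_pos (hn : 0 < n) {x : Fin n → ℝ} (hx : NonConstant x) :
    0 < (∑ i, (x i - bmean x) ^ 2) / n := by
  have hnum : 0 < ∑ i, (x i - bmean x) ^ 2 := by
    obtain ⟨i, hi⟩ := Function.ne_iff.1 hx
    refine Finset.sum_pos' (fun j _ => sq_nonneg _) ⟨i, Finset.mem_univ i, ?_⟩
    have : x i - bmean x ≠ 0 := sub_ne_zero.2 hi
    positivity
  positivity

lemma bstd_pos (hn : 0 < n) {x : Fin n → ℝ} (hx : NonConstant x) : 0 < bstd x :=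
  Real.sqrt_pos.2 (variance_pos hn hx)

lemma bstd_sq (hn : 0 < n) {x : Fin n → ℝ} (hx : NonConstant x) :
    bstd x ^ 2 = (∑ i, (x i - bmean x) ^ 2) / n :=
  Real.sq_sqrt (le_of_lt (variance_pos hn hx))

lemma sum_standardize (hn : 0 < n) (x : Fin n → ℝ) : ∑ i, standardize x i = 0 := by
  have hn' : (n:ℝ) ≠ 0 := by positivity
  simp only [standardize, ← Finset.sum_div, sum_center hn' x, zero_div]

lemma sum_standardize_sq (hn : 0 < n) {x : Fin n → ℝ} (hx : NonConstant x) :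
    ∑ i, standardize x i ^ 2 = n := by
  have hσ := bstd_pos hn hx
  have h2 := bstd_sq hn hx
  have hn' : (n:ℝ) ≠ 0 := by positivity
  have : ∑ i, standardize x i ^ 2 = (∑ i, (x i - bmean x) ^ 2) / bstd x ^ 2 := by
    simp [standardize, div_pow, Finset.sum_div]
  rw [this, h2]
  have hpos : 0 < ∑ i, (x i - bmean x) ^ 2 := by
    have h := variance_pos hn hx
    have hn0 : (0:ℝ) < n := by positivity
    have h2' : 0 < (∑ i, (x i - bmean x) ^ 2) / (n:ℝ) * n := mul_pos h hn0
    rwa [div_mul_cancel₀ _ hn'] at h2'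
  field_simp

end Aux
section Deriv
variable {n : ℕ}

lemma coeff_sum_eq {n : ℕ} (hn : 0 < n) (x : Fin n → ℝ) (hσ' : bstd x ≠ 0)
    (i : Fin n) (w : Fin n → ℝ) :
    ∑ j, ((if i = j then (1:ℝ) else 0) - 1/n
        - standardize x i * standardize x j / n)/bstd x * w j
      = (w i - (∑ j, w j)/n - standardize x i * (∑ j, standardize x j * w j)/n)/bstd x := by
  have hn' : (n:ℝ) ≠ 0 := by positivity
  have h3 : ∀ j ∈ Finset.univ, ((if i = j then (1:ℝ) else 0) - 1/n
      - standardize x i * standardize x j / n)/bstd x * w j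
      = (if i = j then w j / bstd x else 0) - w j/(n*bstd x)
        - standardize x i * (standardize x j * w j)/(n*bstd x) := by
    intro j _
    by_cases h : i = j
    · simp only [h, if_true]
      field_simp
    · simp only [h, if_false]
      field_simp
      ring
  rw [Finset.sum_congr rfl h3, Finset.sum_sub_distrib, Finset.sum_sub_distrib,
    Finset.sum_ite_eq]
  simp only [Finset.mem_univ, if_true]
  rw [← Finset.sum_div]
  have h5 : ∑ j, standardize x i * (standardize x j * w j) / (↑n * bstd x)
      = standardize x i * (∑ j, standardize x j * w j) / (↑n * bstd x) := by
    rw [← Finset.sum_div, ← Finset.mul_sum]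
  rw [h5]
  field_simp

lemma hasFDerivAt_standardize (hn : 0 < n) {x : Fin n → ℝ} (hx : NonConstant x) (i : Fin n) :
    HasFDerivAt (fun v => standardize v i)
      (coeffCLM fun j => ((if i = j then (1:ℝ) else 0) - 1/n
        - standardize x i * standardize x j / n) / bstd x) x := by
  have hσ : 0 < bstd x := bstd_pos hn hx
  have hσ' : bstd x ≠ 0 := ne_of_gt hσ
  have hn' : (n:ℝ) ≠ 0 := by positivity
  have hM : HasFDerivAt (bmean (n := n)) (coeffCLM fun _ : Fin n => (1:ℝ)/n) x := by
    have h : (bmean (n := n)) = fun v => coeffCLM (fun _ : Fin n => (1:ℝ)/n) v := by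
      funext v
      rw [coeffCLM_apply, bmean, Finset.sum_div]
      exact Finset.sum_congr rfl fun j _ => by ring
    rw [h]
    exact (coeffCLM _).hasFDerivAt
  have hcomp : ∀ j, HasFDerivAt (fun v : Fin n → ℝ => v j - bmean v)
      ((ContinuousLinearMap.proj j : (Fin n → ℝ) →L[ℝ] ℝ) - coeffCLM fun _ => (1:ℝ)/n) x :=
    fun j => ((ContinuousLinearMap.proj j :
      (Fin n → ℝ) →L[ℝ] ℝ).hasFDerivAt (x := x)).sub hM
  have hsq : ∀ j, HasFDerivAt (fun v : Fin n → ℝ => (v j - bmean v) ^ 2)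
      ((2*(x j - bmean x)) • ((ContinuousLinearMap.proj j : (Fin n → ℝ) →L[ℝ] ℝ)
        - coeffCLM fun _ => (1:ℝ)/n)) x := by
    intro j
    have h := (hcomp j).fun_mul (hcomp j)
    have heq : (fun v : Fin n → ℝ => (v j - bmean v) ^ 2)
        = fun v => (v j - bmean v) * (v j - bmean v) := by
      funext v; ring
    rw [heq]
    rw [two_mul, add_smul]
    exact h
  have hso := HasFDerivAt.fun_sum (u := Finset.univ) fun j _ => hsq j
  have hq : HasFDerivAt (fun v : Fin n → ℝ => (∑ j, (v j - bmean v) ^ 2)/(n:ℝ))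
      ((n:ℝ)⁻¹ • ∑ j, (2*(x j - bmean x)) •
        ((ContinuousLinearMap.proj j : (Fin n → ℝ) →L[ℝ] ℝ)
          - coeffCLM fun _ => (1:ℝ)/n)) x := by
    have h := hso.const_mul ((n:ℝ)⁻¹)
    have heq : (fun v : Fin n → ℝ => (∑ j, (v j - bmean v) ^ 2)/(n:ℝ))
        = fun v => (n:ℝ)⁻¹ * ∑ j, (v j - bmean v) ^ 2 := by
      funext v; ring
    rw [heq]; exact h
  have hs : HasFDerivAt (bstd (n := n))
      ((1/(2*bstd x)) • ((n:ℝ)⁻¹ • ∑ j, (2*(x j - bmean x)) •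
        ((ContinuousLinearMap.proj j : (Fin n → ℝ) →L[ℝ] ℝ)
          - coeffCLM fun _ => (1:ℝ)/n))) x :=
    hq.sqrt (ne_of_gt (variance_pos hn hx))
  have hinv : HasFDerivAt (fun v : Fin n → ℝ => (bstd v)⁻¹)
      ((-(bstd x ^ 2)⁻¹) • ((1/(2*bstd x)) • ((n:ℝ)⁻¹ • ∑ j, (2*(x j - bmean x)) •
        ((ContinuousLinearMap.proj j : (Fin n → ℝ) →L[ℝ] ℝ)
          - coeffCLM fun _ => (1:ℝ)/n)))) x :=
    (hasDerivAt_inv hσ').comp_hasFDerivAt x hs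
  have hmul := (hcomp i).mul hinv
  have heq : (fun v : Fin n → ℝ => standardize v i)
      = fun v => (v i - bmean v) * (bstd v)⁻¹ := by
    funext v; rw [standardize, div_eq_mul_inv]
  rw [heq]
  refine hmul.congr_fderiv ?_
  ext w
  simp only [ContinuousLinearMap.add_apply, ContinuousLinearMap.coe_smul', Pi.smul_apply,
    ContinuousLinearMap.coe_sub', Pi.sub_apply, ContinuousLinearMap.proj_apply,
    coeffCLM_apply, ContinuousLinearMap.coe_sum', Finset.sum_apply, smul_eq_mul]
  -- abbreviations
  have e1 : ∑ k, (1:ℝ)/(n:ℝ) * w k = (∑ k, w k)/n := by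
    rw [← Finset.mul_sum]; ring
  rw [e1]
  have e2 : ∑ j, 2*(x j - bmean x) * (w j - (∑ k, w k)/n)
      = 2 * ∑ j, (x j - bmean x) * w j := by
    have hc := sum_center hn' x
    have h2 : ∀ j ∈ Finset.univ, 2*(x j - bmean x) * (w j - (∑ k, w k)/n)
        = 2*((x j - bmean x) * w j) - (x j - bmean x) * (2*((∑ k, w k)/n)) :=
      fun j _ => by ring
    rw [Finset.sum_congr rfl h2, Finset.sum_sub_distrib, ← Finset.sum_mul, hc,
      ← Finset.mul_sum]
    ring
  rw [e2]
  have e4 : ∑ j, standardize x j * w j = (∑ j, (x j - bmean x) * w j)/bstd x := by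
    rw [Finset.sum_div]
    exact Finset.sum_congr rfl fun j _ => by rw [standardize]; ring
  have e3 := coeff_sum_eq hn x hσ' i w
  rw [e3, e4, standardize]
  field_simp
  ring
end Deriv

/-- Findings: for the second-order Taylor model of the batch loss
`T(X) = nc + Σᵢ (y⁽ⁱ⁾−ỹ)ᵀg + (1/2)Σᵢ (y⁽ⁱ⁾−ỹ)ᵀH(y⁽ⁱ⁾−ỹ)` with `H` symmetric, the
gradient of `T` with respect to the row `x_d` equals
`(1/σ(x_d)) Σ_{j≠d} H_{d,j} (y_j − (⟨y_j,y_d⟩/‖y_d‖²) y_d)`; the gradient `g`, the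
diagonal of `H`, and the linearly-correlated off-diagonal components contribute
nothing. -/
theorem findings_combined_gradient (D n : ℕ) (hD : 1 ≤ D) (hn : 2 ≤ n)
    (c : ℝ) (g ytil : Fin D → ℝ) (H : Matrix (Fin D) (Fin D) ℝ) (hH : H.IsSymm)
    (X : Fin D → Fin n → ℝ) (hX : ∀ e, NonConstant (X e)) (d : Fin D) :
    let T : (Fin D → Fin n → ℝ) → ℝ := fun Z =>
      (n : ℝ) * c + (∑ i, ∑ e, (standardize (Z e) i - ytil e) * g e)
        + (1 / 2 : ℝ) * ∑ i, ∑ j, ∑ k,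
            (standardize (Z j) i - ytil j) * H j k * (standardize (Z k) i - ytil k)
    let Yrow : Fin D → Fin n → ℝ := fun j => standardize (X j)
    ∃ L : (Fin n → ℝ) →L[ℝ] ℝ,
      HasFDerivAt (fun v : Fin n → ℝ => T (Function.update X d v)) L (X d) ∧
      ∀ w : Fin n → ℝ,
        L w = ∑ i,
          ((1 / bstd (X d)) * ∑ j ∈ Finset.univ.filter (fun j => j ≠ d),
            H d j * (Yrow j i
              - ((∑ i', Yrow j i' * Yrow d i') / (∑ i', Yrow d i' ^ 2)) * Yrow d i)) * w i := by
  intro T Yrow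
  classical
  have hn0 : 0 < n := lt_of_lt_of_le two_pos hn
  have hn' : (n:ℝ) ≠ 0 := by positivity
  have hσ : 0 < bstd (X d) := bstd_pos hn0 (hX d)
  have hσ' : bstd (X d) ≠ 0 := ne_of_gt hσ
  set Ls : Fin n → (Fin n → ℝ) →L[ℝ] ℝ := fun i => coeffCLM fun j =>
    ((if i = j then (1:ℝ) else 0) - 1/n
      - standardize (X d) i * standardize (X d) j / n) / bstd (X d) with hLsdef
  have hLs : ∀ i, HasFDerivAt (fun v => standardize v i) (Ls i) (X d) :=
    fun i => hasFDerivAt_standardize hn0 (hX d) i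
  have hA : ∀ (e : Fin D) (i : Fin n), HasFDerivAt
      (fun v : Fin n → ℝ => standardize (Function.update X d v e) i)
      (if e = d then Ls i else 0) (X d) := by
    intro e i
    by_cases he : e = d
    · subst he
      simpa using hLs i
    · rw [if_neg he]
      have h : (fun v : Fin n → ℝ => standardize (Function.update X d v e) i)
          = fun _ => standardize (X e) i := by
        funext v; rw [Function.update_of_ne he]
      rw [h]
      exact hasFDerivAt_const _ _
  have hD1 : HasFDerivAt
      (fun v : Fin n → ℝ => ∑ i, ∑ e, (standardize (Function.update X d v e) i - ytil e) * g e)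
      (∑ i, ∑ e, g e • (if e = d then Ls i else 0)) (X d) :=
    HasFDerivAt.fun_sum fun i _ => HasFDerivAt.fun_sum fun e _ =>
      ((hA e i).sub_const (ytil e)).mul_const (g e)
  have hD2 : HasFDerivAt
      (fun v : Fin n → ℝ => ∑ i, ∑ j, ∑ k,
        (standardize (Function.update X d v j) i - ytil j) * H j k *
          (standardize (Function.update X d v k) i - ytil k))
      (∑ i, ∑ j, ∑ k,
        (((standardize (Function.update X d (X d) j) i - ytil j) * H j k) •
            (if k = d then Ls i else 0)
          + (standardize (Function.update X d (X d) k) i - ytil k) •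
            (H j k • (if j = d then Ls i else 0)))) (X d) :=
    HasFDerivAt.fun_sum fun i _ => HasFDerivAt.fun_sum fun j _ => HasFDerivAt.fun_sum fun k _ =>
      (((hA j i).sub_const (ytil j)).mul_const (H j k)).fun_mul ((hA k i).sub_const (ytil k))
  have htot := ((hasFDerivAt_const ((n:ℝ) * c) (X d)).add hD1).add (hD2.const_mul (1/2 : ℝ))
  refine ⟨_, htot, ?_⟩
  intro w
  have hYrow : ∀ j, Yrow j = standardize (X j) := fun j => rfl
  simp only [ContinuousLinearMap.add_apply, ContinuousLinearMap.coe_sum',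
    Finset.sum_apply, ContinuousLinearMap.coe_smul', Pi.smul_apply,
    ContinuousLinearMap.zero_apply, smul_eq_mul,
    apply_ite (fun f : (Fin n → ℝ) →L[ℝ] ℝ => f w),
    Function.update_eq_self, hYrow]
  -- basic facts
  have hy0 : ∑ i, standardize (X d) i = 0 := sum_standardize hn0 (X d)
  have hyk0 : ∀ k : Fin D, ∑ i, standardize (X k) i = 0 := fun k => sum_standardize hn0 (X k)
  have hy2 : ∑ i, standardize (X d) i ^ 2 = (n:ℝ) := sum_standardize_sq hn0 (hX d)
  have hLw : ∀ i, Ls i w = (w i - (∑ j, w j)/n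
      - standardize (X d) i * (∑ j, standardize (X d) j * w j)/n)/bstd (X d) := by
    intro i
    rw [hLsdef]
    simp only [coeffCLM_apply]
    exact coeff_sum_eq hn0 (X d) hσ' i w
  have G1 : ∑ i, Ls i w = 0 := by
    have h1 : ∀ i ∈ (Finset.univ : Finset (Fin n)), Ls i w
        = (w i - (∑ j, w j)/n
          - standardize (X d) i * ((∑ j, standardize (X d) j * w j)/n))/bstd (X d) :=
      fun i _ => by rw [hLw i]; ring
    rw [Finset.sum_congr rfl h1, ← Finset.sum_div, Finset.sum_sub_distrib,
      Finset.sum_sub_distrib, ← Finset.sum_mul, hy0, zero_mul, sub_zero,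
      Finset.sum_const, Finset.card_univ, Fintype.card_fin, nsmul_eq_mul]
    field_simp
    ring
  have G2 : ∑ i, standardize (X d) i * Ls i w = 0 := by
    have h1 : ∀ i ∈ (Finset.univ : Finset (Fin n)), standardize (X d) i * Ls i w
        = (standardize (X d) i * w i - standardize (X d) i * ((∑ j, w j)/n)
          - standardize (X d) i ^ 2 * ((∑ j, standardize (X d) j * w j)/n))/bstd (X d) :=
      fun i _ => by rw [hLw i]; ring
    rw [Finset.sum_congr rfl h1, ← Finset.sum_div, Finset.sum_sub_distrib,
      Finset.sum_sub_distrib, ← Finset.sum_mul, ← Finset.sum_mul, hy0, zero_mul, hy2]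
    field_simp
    ring
  have G3 : ∀ kk : Fin D, ∑ i, standardize (X kk) i * Ls i w
      = ((∑ i, standardize (X kk) i * w i)
        - (∑ i, standardize (X kk) i * standardize (X d) i)
          * ((∑ j, standardize (X d) j * w j)/n))/bstd (X d) := by
    intro kk
    have h1 : ∀ i ∈ (Finset.univ : Finset (Fin n)), standardize (X kk) i * Ls i w
        = (standardize (X kk) i * w i - standardize (X kk) i * ((∑ j, w j)/n)
          - standardize (X kk) i * standardize (X d) i
            * ((∑ j, standardize (X d) j * w j)/n))/bstd (X d) :=
      fun i _ => by rw [hLw i]; ring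
    rw [Finset.sum_congr rfl h1, ← Finset.sum_div, Finset.sum_sub_distrib,
      Finset.sum_sub_distrib, ← Finset.sum_mul, ← Finset.sum_mul, hyk0 kk, zero_mul,
      sub_zero]
  -- Step A: the gradient term vanishes
  have hS1 : (∑ i : Fin n, ∑ e : Fin D, g e * if e = d then Ls i w else 0) = 0 := by
    have h : ∀ i ∈ (Finset.univ : Finset (Fin n)),
        (∑ e : Fin D, g e * if e = d then Ls i w else 0) = g d * Ls i w := by
      intro i _
      simp [mul_ite, mul_zero, Finset.sum_ite_eq']
    rw [Finset.sum_congr rfl h, ← Finset.mul_sum, G1, mul_zero]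
  -- Step B: collapse the Hessian term
  have hS2 : (∑ i : Fin n, ∑ j : Fin D, ∑ k : Fin D,
        ((standardize (X j) i - ytil j) * H j k * (if k = d then Ls i w else 0)
          + (standardize (X k) i - ytil k) * (H j k * (if j = d then Ls i w else 0))))
      = 2 * ∑ k : Fin D, H d k * ∑ i, standardize (X k) i * Ls i w := by
    have hinner : ∀ i ∈ (Finset.univ : Finset (Fin n)),
        (∑ j : Fin D, ∑ k : Fin D,
          ((standardize (X j) i - ytil j) * H j k * (if k = d then Ls i w else 0)
            + (standardize (X k) i - ytil k) * (H j k * (if j = d then Ls i w else 0))))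
        = 2 * ∑ k : Fin D, (standardize (X k) i - ytil k) * (H d k * Ls i w) := by
      intro i _
      rw [Finset.sum_congr rfl (fun j (_ : j ∈ Finset.univ) => Finset.sum_add_distrib),
        Finset.sum_add_distrib]
      have hT1 : (∑ j : Fin D, ∑ k : Fin D,
          (standardize (X j) i - ytil j) * H j k * (if k = d then Ls i w else 0))
          = ∑ j : Fin D, (standardize (X j) i - ytil j) * (H d j * Ls i w) := by
        refine Finset.sum_congr rfl fun j _ => ?_
        simp only [mul_ite, mul_zero, Finset.sum_ite_eq', Finset.mem_univ, if_true]
        rw [hH.apply d j]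
        ring
      have hT2 : (∑ j : Fin D, ∑ k : Fin D,
          (standardize (X k) i - ytil k) * (H j k * (if j = d then Ls i w else 0)))
          = ∑ k : Fin D, (standardize (X k) i - ytil k) * (H d k * Ls i w) := by
        rw [Finset.sum_comm]
        refine Finset.sum_congr rfl fun k _ => ?_
        simp [mul_ite, mul_zero, Finset.sum_ite_eq']
      rw [hT1, hT2, two_mul]
    rw [Finset.sum_congr rfl hinner, ← Finset.mul_sum, Finset.sum_comm]
    congr 1
    refine Finset.sum_congr rfl fun k _ => ?_
    have hzero : ∑ i, ytil k * Ls i w = ytil k * ∑ i, Ls i w := by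
      rw [Finset.mul_sum]
    have h : ∀ i ∈ (Finset.univ : Finset (Fin n)),
        (standardize (X k) i - ytil k) * (H d k * Ls i w)
        = H d k * (standardize (X k) i * Ls i w) - H d k * (ytil k * Ls i w) :=
      fun i _ => by ring
    rw [Finset.sum_congr rfl h, Finset.sum_sub_distrib, ← Finset.mul_sum, ← Finset.mul_sum,
      ← Finset.mul_sum, G1]
    simp
  rw [hS1, hS2]
  -- Step C: split off the diagonal term
  have hsplit : (∑ k : Fin D, H d k * ∑ i, standardize (X k) i * Ls i w)
      = ∑ k ∈ Finset.univ.filter (fun k => k ≠ d),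
          H d k * ∑ i, standardize (X k) i * Ls i w := by
    rw [← Finset.sum_filter_add_sum_filter_not Finset.univ (fun k => k ≠ d)
      (fun k => H d k * ∑ i, standardize (X k) i * Ls i w)]
    have h0 : (∑ k ∈ Finset.univ.filter (fun k => ¬ k ≠ d),
        H d k * ∑ i, standardize (X k) i * Ls i w) = 0 := by
      apply Finset.sum_eq_zero
      intro k hk
      simp only [Finset.mem_filter, not_not] at hk
      rw [hk.2, G2, mul_zero]
    rw [h0, add_zero]
  rw [hsplit]
  rw [show (∑ k ∈ Finset.univ.filter (fun k => k ≠ d),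
        H d k * ∑ i, standardize (X k) i * Ls i w)
      = ∑ k ∈ Finset.univ.filter (fun k => k ≠ d),
          H d k * (((∑ i, standardize (X k) i * w i)
            - (∑ i, standardize (X k) i * standardize (X d) i)
              * ((∑ j, standardize (X d) j * w j)/n))/bstd (X d))
    from Finset.sum_congr rfl fun k _ => by rw [G3 k]]
  -- Step D: transform the RHS
  rw [hy2]
  have hperk : ∀ kk : Fin D,
      (∑ i, (1 / bstd (X d) * (H d kk * (standardize (X kk) i
          - ((∑ i', standardize (X kk) i' * standardize (X d) i') / (n:ℝ))
            * standardize (X d) i))) * w i)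
      = H d kk * (((∑ i, standardize (X kk) i * w i)
          - (∑ i, standardize (X kk) i * standardize (X d) i)
            * ((∑ j, standardize (X d) j * w j)/n))/bstd (X d)) := by
    intro kk
    have h : ∀ i ∈ (Finset.univ : Finset (Fin n)),
        (1 / bstd (X d) * (H d kk * (standardize (X kk) i
          - ((∑ i', standardize (X kk) i' * standardize (X d) i') / (n:ℝ))
            * standardize (X d) i))) * w i
        = (H d kk / bstd (X d)) * (standardize (X kk) i * w i)
          - (H d kk / bstd (X d))
            * ((∑ i', standardize (X kk) i' * standardize (X d) i')/n)
            * (standardize (X d) i * w i) := fun i _ => by ring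
    rw [Finset.sum_congr rfl h, Finset.sum_sub_distrib, ← Finset.mul_sum, ← Finset.mul_sum]
    field_simp
  have hR : (∑ i, (1 / bstd (X d) * ∑ k ∈ Finset.univ.filter (fun j => j ≠ d),
        H d k * (standardize (X k) i
          - ((∑ i', standardize (X k) i' * standardize (X d) i') / (n:ℝ))
            * standardize (X d) i)) * w i)
      = ∑ k ∈ Finset.univ.filter (fun j => j ≠ d),
          H d k * (((∑ i, standardize (X k) i * w i)
            - (∑ i, standardize (X k) i * standardize (X d) i)
              * ((∑ j, standardize (X d) j * w j)/n))/bstd (X d)) := by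
    have hstep : ∀ i ∈ (Finset.univ : Finset (Fin n)),
        (1 / bstd (X d) * ∑ k ∈ Finset.univ.filter (fun j => j ≠ d),
          H d k * (standardize (X k) i
            - ((∑ i', standardize (X k) i' * standardize (X d) i') / (n:ℝ))
              * standardize (X d) i)) * w i
        = ∑ k ∈ Finset.univ.filter (fun j => j ≠ d),
            (1 / bstd (X d) * (H d k * (standardize (X k) i
              - ((∑ i', standardize (X k) i' * standardize (X d) i') / (n:ℝ))
                * standardize (X d) i))) * w i := by
      intro i _
      rw [Finset.mul_sum, Finset.sum_mul]
    rw [Finset.sum_congr rfl hstep, Finset.sum_comm]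
    exact Finset.sum_congr rfl fun k _ => hperk k
  rw [hR]
  ring
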